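/- Let M₀ be a Puiseux monoid satisfying the ACCP with 1 ∈ M₀ and 1 not an atom of M₀, and let N be a numerical monoid containing a prime number p such that p > max 𝒜(N) and v_p(q) ≥ 0 for every nonzero q ∈ M₀. Then the Puiseux monoid M = M₀ + p^{-1}N satisfies the ACCP and 𝒜(M) = 𝒜(M₀) ∪ 𝒜(p^{-1}N). -/

import Mathlib

/-- An atom of the additive submonoid `M`: a nonzero element of `M` that is not the
sum of two nonzero elements of `M`. -/
def IsAtomOf {α : Type*} [AddCommMonoid α] (M : AddSubmonoid α) (a : α) : Prop :=
  a ∈ M ∧ a ≠ 0 ∧ ∀ b ∈ M, ∀ c ∈ M, b + c = a → b = 0 ∨ c = 0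

/-- The length set of `q` in `M`: the set of all `ℓ` such that `q` is a sum of `ℓ`
atoms of `M` (counted with multiplicity). -/
def LengthSet {α : Type*} [AddCommMonoid α] (M : AddSubmonoid α) (q : α) : Set ℕ :=
  {ℓ | ∃ s : Multiset α, Multiset.card s = ℓ ∧ (∀ a ∈ s, IsAtomOf M a) ∧ s.sum = q}

/-- The additive submonoid `M` satisfies the ACCP: every ascending chain of principal
ideals `f n + M ⊆ f (n+1) + M` stabilizes. -/
def AddACCP {α : Type*} [AddCommMonoid α] (M : AddSubmonoid α) : Prop :=
  ∀ f : ℕ → α, (∀ n, f n ∈ M) → (∀ n, ∃ c ∈ M, f n = f (n + 1) + c) →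
    ∃ N, ∀ n ≥ N, ∃ c ∈ M, f n = f N + c

/-- The Puiseux monoid generated by the reciprocals of the elements of `P`. -/
def MP (P : Set ℕ) : AddSubmonoid ℚ :=
  AddSubmonoid.closure {q : ℚ | ∃ p ∈ P, q = 1 / (p : ℚ)}

/-- The additive monoid homomorphism `ℕ →+ ℚ` sending `n` to `n / p`. -/
def scaleRecip (p : ℕ) : ℕ →+ ℚ where
  toFun n := (n : ℚ) / (p : ℚ)
  map_zero' := by simp
  map_add' := fun a b => by push_cast; ring

lemma resid_aux (p : ℕ) (hp : p.Prime) (q : ℚ) (hq : ¬ (p ∣ q.den)) (z : ℤ)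
    (hz : (p : ℚ) * q = z) : (p : ℤ) ∣ z := by
  have hp0 : (p : ℚ) ≠ 0 := by exact_mod_cast hp.pos.ne'
  have hq' : q = (z : ℚ) / (p : ℚ) := by field_simp; linarith [hz]
  have hden : ((Rat.divInt z (p : ℤ)).den : ℤ) ∣ (p : ℤ) := Rat.den_dvd z (p : ℤ)
  rw [Rat.divInt_eq_div] at hden
  have hden' : q.den ∣ p := by
    rw [hq']
    exact_mod_cast (by push_cast at hden ⊢; exact_mod_cast hden : (((z : ℚ) / (p:ℚ)).den : ℤ) ∣ (p:ℤ))
  rcases (Nat.Prime.eq_one_or_self_of_dvd hp q.den hden') with h1 | h1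
  · have : (q.num : ℚ) = q := by rw [← Rat.den_eq_one_iff]; exact h1
    have : (p : ℚ) * (q.num : ℚ) = (z : ℚ) := by rw [this]; exact hz
    have : (p : ℤ) * q.num = z := by exact_mod_cast this
    exact ⟨q.num, this.symm⟩
  · exact absurd (h1 ▸ dvd_refl p) hq

lemma mono_stab (S : ℕ → ℕ) (hm : Monotone S) (B : ℕ) (hB : ∀ n, S n ≤ B) :
    ∃ n₀, ∀ n ≥ n₀, S n = S n₀ := by
  have hbdd : BddAbove (Set.range S) := ⟨B, by rintro _ ⟨n, rfl⟩; exact hB n⟩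
  obtain ⟨n₀, hn₀⟩ := Nat.sSup_mem (Set.range_nonempty S) hbdd
  exact ⟨n₀, fun n hn => le_antisymm (hn₀ ▸ le_csSup hbdd ⟨n, rfl⟩) (hm hn)⟩

theorem stmt13 (M₀ : AddSubmonoid ℚ) (hpos : ∀ x ∈ M₀, 0 ≤ x)
    (hacc : AddACCP M₀) (h1 : (1 : ℚ) ∈ M₀) (h1na : ¬ IsAtomOf M₀ 1)
    (N : AddSubmonoid ℕ) (hnum : {n : ℕ | n ∉ N}.Finite)
    (p : ℕ) (hp : p.Prime) (hpN : p ∈ N)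
    (hmax : ∀ a : ℕ, IsAtomOf N a → a < p)
    (hval : ∀ q : ℚ, q ∈ M₀ → q ≠ 0 → ¬ (p ∣ q.den))
    (M : AddSubmonoid ℚ)
    (hM : (M : Set ℚ) =
      {x | ∃ a ∈ M₀, ∃ b ∈ AddSubmonoid.map (scaleRecip p) N, x = a + b}) :
    AddACCP M ∧
    ∀ a : ℚ, IsAtomOf M a ↔
      (IsAtomOf M₀ a ∨ IsAtomOf (AddSubmonoid.map (scaleRecip p) N) a) := by
  classical
  have hp0 : (0 : ℚ) < p := by exact_mod_cast hp.pos
  have hp0' : (p : ℚ) ≠ 0 := hp0.ne'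
  set Np := AddSubmonoid.map (scaleRecip p) N with hNpdef
  have hmemM : ∀ x : ℚ, x ∈ M ↔ ∃ a ∈ M₀, ∃ b ∈ Np, x = a + b := by
    intro x
    constructor
    · intro hx
      have : x ∈ (M : Set ℚ) := hx
      rw [hM] at this
      exact this
    · intro hx
      show x ∈ (M : Set ℚ)
      rw [hM]
      exact hx
  have hNpmem : ∀ x : ℚ, x ∈ Np ↔ ∃ b ∈ N, (b : ℚ) / p = x := by
    intro x
    simp [hNpdef, AddSubmonoid.mem_map, scaleRecip]
  have hNppos : ∀ x ∈ Np, 0 ≤ x := by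
    intro x hx
    obtain ⟨b, hb, rfl⟩ := (hNpmem x).mp hx
    positivity
  have hMpos : ∀ x ∈ M, 0 ≤ x := by
    intro x hx
    obtain ⟨a, ha, y, hy, rfl⟩ := (hmemM x).mp hx
    exact add_nonneg (hpos a ha) (hNppos y hy)
  have hM0sub : ∀ x ∈ M₀, x ∈ M := fun x hx =>
    (hmemM x).mpr ⟨x, hx, 0, zero_mem _, (add_zero x).symm⟩
  have hNpsub : ∀ x ∈ Np, x ∈ M := fun x hx =>
    (hmemM x).mpr ⟨0, zero_mem _, x, hx, (zero_add x).symm⟩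
  have hden : ∀ a ∈ M₀, ¬ (p ∣ a.den) := by
    intro a ha hdvd
    rcases eq_or_ne a 0 with rfl | h
    · simp at hdvd
      have := hp.two_le; omega
    · exact hval a ha h hdvd
  -- residue lemma
  have hres : ∀ a ∈ M₀, ∀ a' ∈ M₀, ∀ b b' : ℕ,
      a + (b : ℚ) / p = a' + (b' : ℚ) / p → (p : ℤ) ∣ (b' : ℤ) - b := by
    intro a ha a' ha' b b' heq
    have hqden : ¬ (p ∣ (a - a').den) := by
      intro hd
      have hdl : (a - a').den ∣ a.den * (-a').den := by
        rw [sub_eq_add_neg]; exact Rat.add_den_dvd a (-a')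
      rw [Rat.den_neg_eq_den] at hdl
      rcases (Nat.Prime.dvd_mul hp).mp (hd.trans hdl) with h | h
      · exact hden a ha h
      · exact hden a' ha' h
    have hz : (p : ℚ) * (a - a') = (((b' : ℤ) - b : ℤ) : ℚ) := by
      push_cast
      field_simp at heq
      linarith
    exact resid_aux p hp (a - a') hqden _ hz
  have hcastM0 : ∀ k : ℕ, ((k : ℚ)) ∈ M₀ := by
    intro k
    have := AddSubmonoid.nsmul_mem M₀ h1 k
    simpa using this
  have haccM : AddACCP M := by
    intro f hf hstep
    choose c hcM hceq using hstep
    have hdec : ∀ n, ∃ a ∈ M₀, ∃ b : ℕ, b ∈ N ∧ c n = a + (b : ℚ) / p := by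
      intro n
      obtain ⟨a, ha, y, hy, hxy⟩ := (hmemM _).mp (hcM n)
      obtain ⟨b, hb, rfl⟩ := (hNpmem y).mp hy
      exact ⟨a, ha, b, hb, hxy⟩
    choose α hα β hβ hcd using hdec
    have hfsum : ∀ n, f 0 = f n + ∑ k ∈ Finset.range n, c k := by
      intro n
      induction n with
      | zero => simp
      | succ n ih =>
        rw [ih, hceq n, Finset.sum_range_succ]
        ring
    have hcnn : ∀ k, 0 ≤ c k := fun k => hMpos _ (hcM k)
    have hsumle : ∀ n, ∑ k ∈ Finset.range n, c k ≤ f 0 := by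
      intro n
      have h0 := hMpos _ (hf n)
      rw [hfsum n]
      linarith
    -- β is eventually zero
    obtain ⟨m₀, hm₀⟩ : ∃ m₀, ∀ n ≥ m₀, β n = 0 := by
      set S : ℕ → ℕ := fun n => ∑ k ∈ Finset.range n, β k with hS
      have hSmono : Monotone S := by
        apply monotone_nat_of_le_succ
        intro n
        rw [hS]
        simp only [Finset.sum_range_succ]
        omega
      have hSB : ∀ n, S n ≤ ⌈(p : ℚ) * f 0⌉₊ := by
        intro n
        have h1' : ∑ k ∈ Finset.range n, (β k : ℚ) / p ≤ ∑ k ∈ Finset.range n, c k := by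
          apply Finset.sum_le_sum
          intro k _
          rw [hcd k]
          have := hpos _ (hα k)
          linarith
        have h2' : ((S n : ℚ)) / p ≤ f 0 := by
          rw [hS]
          push_cast
          rw [Finset.sum_div]
          exact h1'.trans (hsumle n)
        have h3' : ((S n : ℚ)) ≤ (p : ℚ) * f 0 := by
          rw [div_le_iff₀ hp0] at h2'
          linarith
        exact_mod_cast h3'.trans (Nat.le_ceil _)
      obtain ⟨n₀, hn₀⟩ := mono_stab S hSmono _ hSB
      refine ⟨n₀, fun n hn => ?_⟩
      have e1 : S (n + 1) = S n + β n := Finset.sum_range_succ β n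
      have e2 : S (n + 1) = S n₀ := hn₀ (n + 1) (by omega)
      have e3 : S n = S n₀ := hn₀ n hn
      omega
    -- minimal b decomposition of g n := f (m₀ + n)
    set g : ℕ → ℚ := fun n => f (m₀ + n) with hg
    have hgstep : ∀ n, g n = g (n + 1) + α (m₀ + n) := by
      intro n
      have h1' := hceq (m₀ + n)
      have h2' := hcd (m₀ + n)
      rw [hm₀ (m₀ + n) (by omega)] at h2'
      simp at h2'
      rw [hg]
      show f (m₀ + n) = f (m₀ + (n + 1)) + α (m₀ + n)
      rw [show m₀ + (n + 1) = (m₀ + n) + 1 by omega, h1', h2']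
    have hPex : ∀ n, ∃ b : ℕ, b ∈ N ∧ g n - (b : ℚ) / p ∈ M₀ := by
      intro n
      obtain ⟨a, ha, y, hy, hxy⟩ := (hmemM _).mp (hf (m₀ + n))
      obtain ⟨b, hb, rfl⟩ := (hNpmem y).mp hy
      refine ⟨b, hb, ?_⟩
      have : g n - (b : ℚ) / p = a := by rw [hg]; simp; rw [hxy]; ring
      rw [this]; exact ha
    set b : ℕ → ℕ := fun n => Nat.find (hPex n) with hbdef
    have hbspec : ∀ n, b n ∈ N ∧ g n - (b n : ℚ) / p ∈ M₀ := fun n => Nat.find_spec (hPex n)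
    have hbmono : Monotone b := by
      apply monotone_nat_of_le_succ
      intro n
      apply Nat.find_le
      refine ⟨(hbspec (n + 1)).1, ?_⟩
      have e : g n - (b (n + 1) : ℚ) / p = (g (n + 1) - (b (n + 1) : ℚ) / p) + α (m₀ + n) := by
        rw [hgstep n]; ring
      rw [e]
      exact add_mem (hbspec (n + 1)).2 (hα _)
    have hbB : ∀ n, b n ≤ ⌈(p : ℚ) * f 0⌉₊ := by
      intro n
      have h1' := hpos _ (hbspec n).2
      have h2' : g n ≤ f 0 := by
        rw [hg]
        have h3' := hsumle (m₀ + n)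
        have h4' := hfsum (m₀ + n)
        have h5' : 0 ≤ ∑ k ∈ Finset.range (m₀ + n), c k := Finset.sum_nonneg fun k _ => hcnn k
        linarith
      have h3' : ((b n : ℚ)) ≤ (p : ℚ) * f 0 := by
        rw [← div_le_iff₀' hp0]
        linarith
      exact_mod_cast h3'.trans (Nat.le_ceil _)
    obtain ⟨n₁, hn₁⟩ := mono_stab b hbmono _ hbB
    set A : ℕ → ℚ := fun m => g (n₁ + m) - (b n₁ : ℚ) / p with hA
    have hAM : ∀ m, A m ∈ M₀ := by
      intro m
      have := (hbspec (n₁ + m)).2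
      rw [hn₁ (n₁ + m) (by omega)] at this
      exact this
    have hAstep : ∀ m, ∃ cc ∈ M₀, A m = A (m + 1) + cc := by
      intro m
      refine ⟨α (m₀ + (n₁ + m)), hα _, ?_⟩
      rw [hA]
      show g (n₁ + m) - (b n₁ : ℚ) / p = g (n₁ + (m + 1)) - (b n₁ : ℚ) / p + α (m₀ + (n₁ + m))
      rw [show n₁ + (m + 1) = (n₁ + m) + 1 by omega]
      rw [hgstep (n₁ + m)]
      ring
    obtain ⟨N₂, hN₂⟩ := hacc A hAM hAstep
    refine ⟨m₀ + (n₁ + N₂), fun n hn => ?_⟩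
    obtain ⟨m, hm, rfl⟩ : ∃ m, N₂ ≤ m ∧ n = m₀ + (n₁ + m) :=
      ⟨n - m₀ - n₁, by omega, by omega⟩
    obtain ⟨cc, hcc, hcceq⟩ := hN₂ m hm
    refine ⟨cc, hM0sub cc hcc, ?_⟩
    have e1 : f (m₀ + (n₁ + m)) = A m + (b n₁ : ℚ) / p := by
      rw [hA]; show f (m₀ + (n₁ + m)) = g (n₁ + m) - _ / _ + _ / _; rw [hg]; ring
    have e2 : f (m₀ + (n₁ + N₂)) = A N₂ + (b n₁ : ℚ) / p := by
      rw [hA]; show f (m₀ + (n₁ + N₂)) = g (n₁ + N₂) - _ / _ + _ / _; rw [hg]; ring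
    rw [e1, e2, hcceq]
    ring
  refine ⟨haccM, fun a => ⟨?_, ?_⟩⟩
  · rintro ⟨haM, hane, hsplit⟩
    obtain ⟨a₀, ha₀, y, hy, hay⟩ := (hmemM a).mp haM
    rcases hsplit a₀ (hM0sub _ ha₀) y (hNpsub _ hy) hay.symm with h | h
    · right
      have haN : a ∈ Np := by rw [hay, h, zero_add]; exact hy
      exact ⟨haN, hane, fun u hu v hv huv => hsplit u (hNpsub u hu) v (hNpsub v hv) huv⟩
    · left
      have haM0' : a ∈ M₀ := by rw [hay, h, add_zero]; exact ha₀
      exact ⟨haM0', hane, fun u hu v hv huv => hsplit u (hM0sub u hu) v (hM0sub v hv) huv⟩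
  · rintro (⟨haM0, hane, hsplit0⟩ | ⟨haNp, hane, hsplitN⟩)
    · -- M₀-atom case
      refine ⟨hM0sub a haM0, hane, ?_⟩
      intro x hx y hy hxy
      obtain ⟨a₁, ha₁, u, hu, rfl⟩ := (hmemM x).mp hx
      obtain ⟨a₂, ha₂, v, hv, rfl⟩ := (hmemM y).mp hy
      obtain ⟨b₁, hb₁, rfl⟩ := (hNpmem u).mp hu
      obtain ⟨b₂, hb₂, rfl⟩ := (hNpmem v).mp hv
      have heq : (a₁ + a₂) + ((b₁ + b₂ : ℕ) : ℚ) / p = a + ((0 : ℕ) : ℚ) / p := by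
        push_cast
        rw [add_div, zero_div, add_zero, ← hxy]
        ring
      have hdvd := hres _ (add_mem ha₁ ha₂) _ haM0 _ _ heq
      obtain ⟨k, hk⟩ : ∃ k : ℕ, b₁ + b₂ = p * k := by
        have h' : (p : ℤ) ∣ ((b₁ + b₂ : ℕ) : ℤ) := by simpa using dvd_neg.mpr hdvd
        exact Int.natCast_dvd_natCast.mp h'
      have hkM : ((k : ℚ)) ∈ M₀ := hcastM0 k
      have hbb : (b₁ : ℚ) / p + (b₂ : ℚ) / p = (k : ℚ) := by
        rw [← add_div,
          show ((b₁ : ℚ) + b₂) = (p : ℚ) * k from by exact_mod_cast hk]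
        field_simp
      have hAk : a₁ + (a₂ + (k : ℚ)) = a := by linarith [hxy]
      have hknn : (0 : ℚ) ≤ (k : ℚ) := by positivity
      rcases hsplit0 a₁ ha₁ (a₂ + k) (add_mem ha₂ hkM) hAk with h | h
      · rcases hsplit0 (a₁ + k) (add_mem ha₁ hkM) a₂ ha₂ (by linarith [hAk]) with h' | h'
        · left
          have ha₁nn := hpos a₁ ha₁
          have hk0 : (k : ℚ) = 0 := by linarith
          have hk0' : k = 0 := by exact_mod_cast hk0
          subst hk0'
          have hb10 : b₁ = 0 := by omega
          rw [h, hb10]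
          simp
        · exfalso
          have hak : a = (k : ℚ) := by rw [← hAk, h, h']; ring
          have hk0 : k ≠ 0 := by
            rintro rfl
            exact hane (by rw [hak]; simp)
          rcases Nat.lt_or_ge k 2 with hk2 | hk2
          · have hk1 : k = 1 := by omega
            subst hk1
            have hak1 : a = (1 : ℚ) := by rw [hak]; norm_num
            have : IsAtomOf M₀ 1 := by rw [← hak1]; exact ⟨haM0, hane, hsplit0⟩
            exact h1na this
          · have hk1M : (((k - 1 : ℕ)) : ℚ) ∈ M₀ := hcastM0 (k - 1)
            have hsum : (1 : ℚ) + ((k - 1 : ℕ) : ℚ) = a := by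
              rw [hak, Nat.cast_sub (by omega : 1 ≤ k)]
              push_cast
              ring
            rcases hsplit0 1 h1 _ hk1M hsum with h'' | h''
            · exact one_ne_zero h''
            · have : (k - 1 : ℕ) = 0 := by exact_mod_cast h''
              omega
      · right
        have ha₂nn := hpos a₂ ha₂
        have ha₂0 : a₂ = 0 := by linarith
        have hk0 : (k : ℚ) = 0 := by linarith
        have hk0' : k = 0 := by exact_mod_cast hk0
        subst hk0'
        have hb20 : b₂ = 0 := by omega
        rw [ha₂0, hb20]
        simp
    · -- Np-atom case
      obtain ⟨b₀, hb₀N, hb₀e⟩ := (hNpmem a).mp haNp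
      have hb0atom : IsAtomOf N b₀ := by
        refine ⟨hb₀N, ?_, ?_⟩
        · rintro rfl
          exact hane (by rw [← hb₀e]; simp)
        · intro u hu v hv huv
          have huNp : ((u : ℚ) / p) ∈ Np := (hNpmem _).mpr ⟨u, hu, rfl⟩
          have hvNp : ((v : ℚ) / p) ∈ Np := (hNpmem _).mpr ⟨v, hv, rfl⟩
          have hsum : (u : ℚ) / p + (v : ℚ) / p = a := by
            rw [← hb₀e, ← huv]
            push_cast
            ring
          rcases hsplitN _ huNp _ hvNp hsum with h | h
          · left
            rcases div_eq_zero_iff.mp h with h' | h'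
            · exact_mod_cast h'
            · exact absurd h' hp0'
          · right
            rcases div_eq_zero_iff.mp h with h' | h'
            · exact_mod_cast h'
            · exact absurd h' hp0'
      have hb0lt : b₀ < p := hmax b₀ hb0atom
      refine ⟨hNpsub a haNp, hane, ?_⟩
      intro x hx y hy hxy
      obtain ⟨a₁, ha₁, u, hu, rfl⟩ := (hmemM x).mp hx
      obtain ⟨a₂, ha₂, v, hv, rfl⟩ := (hmemM y).mp hy
      obtain ⟨b₁, hb₁, rfl⟩ := (hNpmem u).mp hu
      obtain ⟨b₂, hb₂, rfl⟩ := (hNpmem v).mp hv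
      have heq : (a₁ + a₂) + ((b₁ + b₂ : ℕ) : ℚ) / p = 0 + (b₀ : ℚ) / p := by
        push_cast
        rw [add_div, zero_add, hb₀e, ← hxy]
        ring
      have hdvd := hres _ (add_mem ha₁ ha₂) 0 (zero_mem _) _ _ heq
      have hle : (b₁ + b₂ : ℕ) ≤ b₀ := by
        have h1' := hpos _ (add_mem ha₁ ha₂)
        have h2' : ((b₁ + b₂ : ℕ) : ℚ) / p ≤ (b₀ : ℚ) / p := by linarith [heq]
        have h3' : ((b₁ + b₂ : ℕ) : ℚ) ≤ (b₀ : ℚ) := by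
          rwa [div_le_div_iff_of_pos_right hp0] at h2'
        exact_mod_cast h3'
      have hbeq : b₁ + b₂ = b₀ := by
        have hdN : p ∣ b₀ - (b₁ + b₂) := by
          have h' : (p : ℤ) ∣ ((b₀ - (b₁ + b₂) : ℕ) : ℤ) := by
            rw [Nat.cast_sub hle]
            exact_mod_cast hdvd
          exact_mod_cast h'
        have hz := Nat.eq_zero_of_dvd_of_lt hdN (by omega)
        omega
      have hsum0 : a₁ + a₂ = 0 := by
        rw [← hbeq] at heq
        linarith [heq]
      have ha₁0 : a₁ = 0 := by linarith [hpos a₁ ha₁, hpos a₂ ha₂]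
      have ha₂0 : a₂ = 0 := by linarith [hpos a₁ ha₁, hpos a₂ ha₂]
      have hxNp : a₁ + (b₁ : ℚ) / p ∈ Np := by
        rw [ha₁0, zero_add]
        exact (hNpmem _).mpr ⟨b₁, hb₁, rfl⟩
      have hyNp : a₂ + (b₂ : ℚ) / p ∈ Np := by
        rw [ha₂0, zero_add]
        exact (hNpmem _).mpr ⟨b₂, hb₂, rfl⟩
      exact hsplitN _ hxNp _ hyNp hxy
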